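/- Every Laman graph G arises from the complete graph K₂ on two vertices by a finite sequence of moves G₀ → G₁ → ... → G_n = G in which G₀ is isomorphic to K₂ and each step G_k → G_{k+1} is either a Henneberg 1 move or a Henneberg 2 move. -/

import Mathlib

open SimpleGraph

noncomputable section

/-- The freedom number `f(H) = 2|V(H)| - |E(H)|` of a subgraph. -/
def subFreedom {V : Type} {G : SimpleGraph V} (H : G.Subgraph) : ℤ :=
  2 * (H.verts.ncard : ℤ) - (H.edgeSet.ncard : ℤ)

/-- The freedom number `f(G) = 2|V| - |E|` of a graph. -/
def gFreedom {V : Type} (G : SimpleGraph V) : ℤ :=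
  2 * ((Set.univ : Set V).ncard : ℤ) - (G.edgeSet.ncard : ℤ)

/-- `G` is independent of type 2: every subgraph (with nonempty vertex set)
has freedom number at least 2. -/
def Indep2 {V : Type} (G : SimpleGraph V) : Prop :=
  ∀ H : G.Subgraph, H.verts.Nonempty → 2 ≤ subFreedom H

/-- `G` is maximally independent of type 2. -/
def MaxIndep2 {V : Type} (G : SimpleGraph V) : Prop := Indep2 G ∧ gFreedom G = 2

/-- `G` is independent of type 3: every subgraph with at least one edge
has freedom number at least 3. -/
def Indep3 {V : Type} (G : SimpleGraph V) : Prop :=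
  ∀ H : G.Subgraph, H.edgeSet.Nonempty → 3 ≤ subFreedom H

/-- `G` is maximally independent of type 3. -/
def MaxIndep3 {V : Type} (G : SimpleGraph V) : Prop := Indep3 G ∧ gFreedom G = 3

/-- A Laman graph: connected and maximally independent of type 3. -/
def Laman {V : Type} (G : SimpleGraph V) : Prop := G.Connected ∧ MaxIndep3 G

/-- Henneberg 1 move: `G'` (on vertex type `β`) is obtained from `G` (on `α`)
via the vertex embedding `φ` by adjoining the new vertex `w` joined to the images
of two distinct vertices `a`, `b` of `G`. -/
def Henneberg1Rel {α β : Type} (G : SimpleGraph α) (G' : SimpleGraph β)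
    (φ : α ↪ β) (w : β) : Prop :=
  (∀ y : β, y ∈ Set.range φ ∨ y = w) ∧ w ∉ Set.range φ ∧
  ∃ a b : α, a ≠ b ∧
    ∀ x y : β, G'.Adj x y ↔
      ((∃ c d : α, G.Adj c d ∧ x = φ c ∧ y = φ d) ∨
       (x = w ∧ (y = φ a ∨ y = φ b)) ∨ (y = w ∧ (x = φ a ∨ x = φ b)))

/-- Henneberg 2 move: `G'` is obtained from `G` by breaking the edge `(u,v)` of `G`
at the new vertex `w` and adding an edge from `w` to a third vertex `z`. -/
def Henneberg2Rel {α β : Type} (G : SimpleGraph α) (G' : SimpleGraph β)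
    (φ : α ↪ β) (w : β) : Prop :=
  (∀ y : β, y ∈ Set.range φ ∨ y = w) ∧ w ∉ Set.range φ ∧
  ∃ u v z : α, G.Adj u v ∧ z ≠ u ∧ z ≠ v ∧
    ∀ x y : β, G'.Adj x y ↔
      ((∃ a b : α, G.Adj a b ∧ ¬ (s(a, b) = s(u, v)) ∧ x = φ a ∧ y = φ b) ∨
       (x = w ∧ (y = φ u ∨ y = φ v ∨ y = φ z)) ∨
       (y = w ∧ (x = φ u ∨ x = φ v ∨ x = φ z)))

set_option linter.unusedSectionVars false
set_option linter.unusedVariables false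
variable {V : Type} [Fintype V]

/-- Induced edge set on a vertex set `S`. -/
def indE (G : SimpleGraph V) (S : Set V) : Set (Sym2 V) :=
  G.edgeSet ∩ {e | ∀ x ∈ e, x ∈ S}

lemma mem_indE {G : SimpleGraph V} {S : Set V} {x y : V} :
    s(x, y) ∈ indE G S ↔ G.Adj x y ∧ x ∈ S ∧ y ∈ S := by
  constructor
  · rintro ⟨h1, h2⟩
    exact ⟨h1, h2 x (by simp), h2 y (by simp)⟩
  · rintro ⟨h1, h2, h3⟩
    refine ⟨h1, ?_⟩
    intro z hz
    rcases Sym2.mem_iff.1 hz with rfl | rfl <;> assumption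

/-- Freedom number of the induced subgraph on `S`. -/
def fF (G : SimpleGraph V) (S : Set V) : ℤ :=
  2 * (S.ncard : ℤ) - ((indE G S).ncard : ℤ)

def indSub (G : SimpleGraph V) (S : Set V) : G.Subgraph where
  verts := S
  Adj a b := G.Adj a b ∧ a ∈ S ∧ b ∈ S
  adj_sub h := h.1
  edge_vert h := h.2.1
  symm := ⟨fun a b h => ⟨h.1.symm, h.2.2, h.2.1⟩⟩

lemma indSub_edgeSet (G : SimpleGraph V) (S : Set V) :
    (indSub G S).edgeSet = indE G S := by
  ext e
  induction e using Sym2.inductionOn with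
  | hf x y => simp [mem_indE, Subgraph.mem_edgeSet, indSub]

lemma subFreedom_indSub (G : SimpleGraph V) (S : Set V) :
    subFreedom (indSub G S) = fF G S := by
  simp only [subFreedom, fF, indSub_edgeSet]
  rfl

lemma indE_mono {G : SimpleGraph V} {S T : Set V} (h : S ⊆ T) : indE G S ⊆ indE G T :=
  fun e he => ⟨he.1, fun x hx => h (he.2 x hx)⟩

lemma fF_indep3 {G : SimpleGraph V} (hG : Indep3 G) {S : Set V}
    (hS : (indE G S).Nonempty) : 3 ≤ fF G S := by
  have := hG (indSub G S) (by rwa [indSub_edgeSet])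
  rwa [subFreedom_indSub] at this

lemma fF_indep2 {G : SimpleGraph V} (hG : Indep3 G) {S : Set V}
    (hS : S.Nonempty) : 2 ≤ fF G S := by
  rcases (indE G S).eq_empty_or_nonempty with h | h
  · have h1 : 0 < S.ncard := (Set.ncard_pos S.toFinite).2 hS
    have : 1 ≤ (S.ncard : ℤ) := by exact_mod_cast h1
    simp [fF, h]
    omega
  · linarith [fF_indep3 hG h]

lemma fF_subgraph_le {G : SimpleGraph V} (K : G.Subgraph) :
    fF G K.verts ≤ subFreedom K := by
  have h1 : K.edgeSet ⊆ indE G K.verts := by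
    intro e he
    refine ⟨K.edgeSet_subset he, ?_⟩
    induction e using Sym2.inductionOn with
    | hf x y =>
      intro z hz
      rw [Subgraph.mem_edgeSet] at he
      rcases Sym2.mem_iff.1 hz with rfl | rfl
      · exact he.fst_mem
      · exact he.snd_mem
  have := Set.ncard_le_ncard h1 (Set.toFinite _)
  unfold fF subFreedom
  omega

lemma indE_inter (G : SimpleGraph V) (A B : Set V) :
    indE G A ∩ indE G B = indE G (A ∩ B) := by
  ext e
  constructor
  · rintro ⟨⟨h1, h2⟩, -, h3⟩
    exact ⟨h1, fun x hx => ⟨h2 x hx, h3 x hx⟩⟩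
  · rintro ⟨h1, h2⟩
    exact ⟨⟨h1, fun x hx => (h2 x hx).1⟩, h1, fun x hx => (h2 x hx).2⟩

lemma fF_submod (G : SimpleGraph V) (A B : Set V) :
    fF G (A ∪ B) ≤ fF G A + fF G B - fF G (A ∩ B) := by
  have h1 : indE G A ∪ indE G B ⊆ indE G (A ∪ B) :=
    Set.union_subset (indE_mono Set.subset_union_left) (indE_mono Set.subset_union_right)
  have h2 := Set.ncard_le_ncard h1 (Set.toFinite _)
  have h3 := Set.ncard_union_add_ncard_inter (indE G A) (indE G B) (Set.toFinite _) (Set.toFinite _)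
  rw [indE_inter] at h3
  have h4 := Set.ncard_union_add_ncard_inter A B (Set.toFinite _) (Set.toFinite _)
  unfold fF
  omega

lemma fF_submod_edge {G : SimpleGraph V} {A B : Set V} {p q : V}
    (hadj : G.Adj p q) (hpA : p ∈ A) (hpB : p ∉ B) (hqB : q ∈ B) (hqA : q ∉ A) :
    fF G (A ∪ B) ≤ fF G A + fF G B - fF G (A ∩ B) - 1 := by
  have hmem : s(p,q) ∈ indE G (A ∪ B) := mem_indE.2 ⟨hadj, Or.inl hpA, Or.inr hqB⟩
  have hnot : s(p,q) ∉ indE G A ∪ indE G B := by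
    rintro (h | h)
    · exact hqA (mem_indE.1 h).2.2
    · exact hpB (mem_indE.1 h).2.1
  have h1 : insert s(p,q) (indE G A ∪ indE G B) ⊆ indE G (A ∪ B) := by
    refine Set.insert_subset hmem ?_
    exact Set.union_subset (indE_mono Set.subset_union_left) (indE_mono Set.subset_union_right)
  have h2 := Set.ncard_le_ncard h1 (Set.toFinite _)
  rw [Set.ncard_insert_of_notMem hnot (Set.toFinite _)] at h2
  have h3 := Set.ncard_union_add_ncard_inter (indE G A) (indE G B) (Set.toFinite _) (Set.toFinite _)
  rw [indE_inter] at h3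
  have h4 := Set.ncard_union_add_ncard_inter A B (Set.toFinite _) (Set.toFinite _)
  unfold fF
  omega

lemma fF_insert {G : SimpleGraph V} {S N : Set V} {x : V}
    (hx : x ∉ S) (hN : N ⊆ S) (hadj : ∀ y ∈ N, G.Adj x y) :
    fF G (insert x S) ≤ fF G S + 2 - N.ncard := by
  have himg : (fun y => s(x, y)) '' N ⊆ indE G (insert x S) := by
    rintro e ⟨y, hy, rfl⟩
    exact mem_indE.2 ⟨hadj y hy, Set.mem_insert _ _, Set.mem_insert_of_mem _ (hN hy)⟩
  have hS' : indE G S ⊆ indE G (insert x S) := indE_mono (Set.subset_insert _ _)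
  have hdisj : Disjoint ((fun y => s(x, y)) '' N) (indE G S) := by
    rw [Set.disjoint_left]
    rintro e ⟨y, hy, rfl⟩ he
    exact hx ((mem_indE.1 he).2.1)
  have hinj : Set.InjOn (fun y => s(x, y)) N := by
    intro y1 h1 y2 h2 he
    simp only [Sym2.eq_iff] at he
    rcases he with ⟨-, h⟩ | ⟨h, h'⟩
    · exact h
    · subst h; exact absurd (hN h2) hx
  have hcard : ((fun y => s(x, y)) '' N).ncard = N.ncard := Set.ncard_image_of_injOn hinj
  have h1 : ((fun y => s(x, y)) '' N) ∪ indE G S ⊆ indE G (insert x S) :=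
    Set.union_subset himg hS'
  have h2 := Set.ncard_le_ncard h1 (Set.toFinite _)
  rw [Set.ncard_union_eq hdisj (Set.toFinite _) (Set.toFinite _), hcard] at h2
  have h5 : (insert x S).ncard = S.ncard + 1 := Set.ncard_insert_of_notMem hx (Set.toFinite _)
  unfold fF
  omega

lemma fF_singleton (G : SimpleGraph V) (x : V) : fF G {x} = 2 := by
  have : indE G {x} = ∅ := by
    ext e
    induction e using Sym2.inductionOn with
    | hf a b =>
      simp only [mem_indE, Set.mem_singleton_iff, Set.mem_empty_iff_false, iff_false]
      rintro ⟨hadj, rfl, rfl⟩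
      exact hadj.ne rfl
  simp [fF, this]

lemma fF_pair_nonadj {G : SimpleGraph V} {x y : V} (hxy : x ≠ y) (h : ¬G.Adj x y) :
    fF G {x, y} = 4 := by
  have : indE G {x, y} = ∅ := by
    ext e
    induction e using Sym2.inductionOn with
    | hf a b =>
      simp only [mem_indE, Set.mem_insert_iff, Set.mem_singleton_iff,
        Set.mem_empty_iff_false, iff_false]
      rintro ⟨hadj, ha, hb⟩
      rcases ha with rfl | rfl <;> rcases hb with rfl | rfl
      · exact hadj.ne rfl
      · exact h hadj
      · exact h hadj.symm
      · exact hadj.ne rfl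
  have hc : ({x, y} : Set V).ncard = 2 := Set.ncard_pair hxy
  simp [fF, this, hc]

lemma indE_univ (G : SimpleGraph V) : indE G Set.univ = G.edgeSet := by
  simp [indE]

lemma fF_univ (G : SimpleGraph V) : fF G Set.univ = gFreedom G := by
  simp [fF, gFreedom, indE_univ]

/-! ### Connectivity from maximal independence -/

lemma fF_eq_three_edge {G : SimpleGraph V} {S : Set V} (h : fF G S = 3) :
    (indE G S).Nonempty := by
  rcases (indE G S).eq_empty_or_nonempty with he | he
  · exfalso
    unfold fF at h
    rw [he] at h
    simp at h
    omega
  · exact he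

lemma maxIndep3_nonempty {G : SimpleGraph V} (hG : MaxIndep3 G) : Nonempty V := by
  by_contra h
  have : IsEmpty V := not_nonempty_iff.1 h
  have h1 : (Set.univ : Set V).ncard = 0 := by simp [Set.ncard_univ]
  have := hG.2
  unfold gFreedom at this
  rw [h1] at this
  omega

lemma maxIndep3_connected {G : SimpleGraph V} (hG : MaxIndep3 G) : G.Connected := by
  have hne := maxIndep3_nonempty hG
  rw [SimpleGraph.connected_iff]
  refine ⟨?_, hne⟩
  intro x y
  by_contra hxy
  set S : Set V := {z | G.Reachable x z} with hSdef
  have hxS : x ∈ S := SimpleGraph.Reachable.refl x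
  have hyS : y ∈ Sᶜ := hxy
  have hcross : ∀ p q : V, G.Adj p q → p ∈ S → q ∈ S := by
    intro p q hpq hp
    exact hp.trans hpq.reachable
  have hsplit : indE G Set.univ = indE G S ∪ indE G Sᶜ := by
    ext e
    induction e using Sym2.inductionOn with
    | hf p q =>
      simp only [Set.mem_union, mem_indE]
      constructor
      · rintro ⟨hpq, -, -⟩
        by_cases hp : p ∈ S
        · exact Or.inl ⟨hpq, hp, hcross p q hpq hp⟩
        · refine Or.inr ⟨hpq, hp, fun hq => hp (hcross q p hpq.symm hq)⟩
      · rintro (⟨hpq, -, -⟩ | ⟨hpq, -, -⟩) <;> exact ⟨hpq, trivial, trivial⟩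
  have hdisj : Disjoint (indE G S) (indE G Sᶜ) := by
    rw [Set.disjoint_left]
    intro e he he'
    induction e using Sym2.inductionOn with
    | hf p q => exact ((mem_indE.1 he').2.1) ((mem_indE.1 he).2.1)
  have hcard : (indE G Set.univ).ncard = (indE G S).ncard + (indE G Sᶜ).ncard := by
    rw [hsplit, Set.ncard_union_eq hdisj (Set.toFinite _) (Set.toFinite _)]
  have hvcard : (Set.univ : Set V).ncard = S.ncard + Sᶜ.ncard := by
    rw [Set.ncard_univ]
    exact (Set.ncard_add_ncard_compl S (Set.toFinite _) (Set.toFinite _)).symm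
  have hsum : gFreedom G = fF G S + fF G Sᶜ := by
    rw [← fF_univ]
    unfold fF
    rw [hcard, hvcard]
    push_cast
    ring
  have h2 : 2 ≤ fF G S := fF_indep2 hG.1 ⟨x, hxS⟩
  have h3 : 2 ≤ fF G Sᶜ := fF_indep2 hG.1 ⟨y, hyS⟩
  rw [hG.2] at hsum
  omega

/-! ### Tight sets and the core lemma for the degree-3 case -/

/-- `U` contains the three neighbours `p,q,r` of `v`, is tight-ish (`fF ≤ 3`) and
misses `v`: contradiction with independence. -/
lemma contra_three {G : SimpleGraph V} (hG : Indep3 G) {v p q r : V} {U : Set V}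
    (hU : U ⊆ {v}ᶜ) (hp : p ∈ U) (hq : q ∈ U) (hr : r ∈ U)
    (hpq : p ≠ q) (hpr : p ≠ r) (hqr : q ≠ r)
    (havp : G.Adj v p) (havq : G.Adj v q) (havr : G.Adj v r)
    (hfF : fF G U ≤ 3) : False := by
  have hvU : v ∉ U := fun h => hU h rfl
  have hNsub : ({p, q, r} : Set V) ⊆ U := by
    intro z hz
    rcases hz with rfl | rfl | rfl <;> assumption
  have hNcard : ({p, q, r} : Set V).ncard = 3 := by
    rw [Set.ncard_insert_of_notMem (by simp [hpq, hpr]) (Set.toFinite _),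
      Set.ncard_pair hqr]
  have hN : ∀ y ∈ ({p, q, r} : Set V), G.Adj v y := by
    intro z hz
    rcases hz with rfl | rfl | rfl <;> assumption
  have h1 := fF_insert hvU hNsub hN
  rw [hNcard] at h1
  have h2 : (indE G (insert v U)).Nonempty :=
    ⟨s(v, p), mem_indE.2 ⟨havp, Set.mem_insert _ _, Set.mem_insert_of_mem _ hp⟩⟩
  have h3 := fF_indep3 hG h2
  omega

lemma tight_union {G : SimpleGraph V} (hG : Indep3 G) {v : V} {A B : Set V}
    (hA : A ⊆ {v}ᶜ) (hB : B ⊆ {v}ᶜ) (hfA : fF G A = 3) (hfB : fF G B = 3)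
    (hAB : 2 ≤ (A ∩ B).ncard) : (A ∪ B) ⊆ {v}ᶜ ∧ fF G (A ∪ B) = 3 := by
  refine ⟨Set.union_subset hA hB, ?_⟩
  have hsub := fF_submod G A B
  have hABf : 3 ≤ fF G (A ∩ B) := by
    rcases (indE G (A ∩ B)).eq_empty_or_nonempty with he | he
    · unfold fF; rw [he]; simp; omega
    · exact fF_indep3 hG he
  have hedge : (indE G (A ∪ B)).Nonempty := by
    obtain ⟨e, he⟩ := fF_eq_three_edge hfA
    exact ⟨e, indE_mono Set.subset_union_left he⟩
  have := fF_indep3 hG hedge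
  omega

lemma blocked_tight {G : SimpleGraph V} (hG : Indep3 G) {v p q : V} {S : Set V}
    (hS : S ⊆ {v}ᶜ) (hp : p ∈ S) (hq : q ∈ S) (hpq : p ≠ q) (hlt : fF G S < 4) :
    fF G S = 3 := by
  rcases (indE G S).eq_empty_or_nonempty with he | he
  · exfalso
    have h2 : 2 ≤ S.ncard := by
      have : ({p, q} : Set V) ⊆ S := by intro z hz; rcases hz with rfl | rfl <;> assumption
      calc 2 = ({p, q} : Set V).ncard := (Set.ncard_pair hpq).symm
        _ ≤ S.ncard := Set.ncard_le_ncard this (Set.toFinite _)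
    unfold fF at hlt
    rw [he] at hlt
    simp at hlt
    omega
  · have := fF_indep3 hG he
    omega

lemma pair_adj_fF_le {G : SimpleGraph V} {b c : V} (h : G.Adj b c) :
    fF G {b, c} ≤ 3 := by
  have h1 : (indE G {b, c}).Nonempty :=
    ⟨s(b, c), mem_indE.2 ⟨h, Set.mem_insert _ _, Set.mem_insert_of_mem _ rfl⟩⟩
  have h2 : 1 ≤ (indE G {b,c}).ncard := (Set.ncard_pos (Set.toFinite _)).2 h1
  have h3 : ({b, c} : Set V).ncard ≤ 2 := Set.ncard_insert_le _ _ |>.trans (by simp)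
  unfold fF
  omega

lemma singleton_inter {A B : Set V} {r : V} (hr : r ∈ A ∩ B) (h : (A ∩ B).ncard < 2) :
    A ∩ B = {r} := by
  rw [Set.eq_singleton_iff_unique_mem]
  refine ⟨hr, fun x hx => ?_⟩
  have h1 : (A ∩ B).ncard ≤ 1 := by omega
  exact (Set.ncard_le_one (Set.toFinite _)).1 h1 x hx r hr

section Core
variable {G : SimpleGraph V} {v a b c p q r : V}

/-- Helper: two edges among the three neighbours. -/
lemma helper_two (hG : Indep3 G) (hpq : p ≠ q) (hpr : p ≠ r) (hqr : q ≠ r)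
    (hvp : G.Adj v p) (hvq : G.Adj v q) (hvr : G.Adj v r)
    (hrp : G.Adj r p) (hrq : G.Adj r q)
    {S : Set V} (hS : S ⊆ {v}ᶜ) (hpS : p ∈ S) (hqS : q ∈ S) (hfS : fF G S = 3) :
    False := by
  by_cases hrS : r ∈ S
  · exact contra_three hG hS hpS hqS hrS hpq hpr hqr hvp hvq hvr (le_of_eq hfS)
  · have hNsub : ({p, q} : Set V) ⊆ S := by
      intro z hz; rcases hz with rfl | rfl <;> assumption
    have hN : ∀ y ∈ ({p, q} : Set V), G.Adj r y := by
      intro z hz; rcases hz with rfl | rfl <;> assumption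
    have h1 := fF_insert hrS hNsub hN
    rw [Set.ncard_pair hpq] at h1
    have hU : insert r S ⊆ {v}ᶜ := by
      refine Set.insert_subset (fun h => ?_) hS
      exact hvr.ne (h.symm)
    exact contra_three hG hU (Set.mem_insert_of_mem _ hpS) (Set.mem_insert_of_mem _ hqS)
      (Set.mem_insert _ _) hpq hpr hqr hvp hvq hvr (by omega)

/-- Helper: exactly one edge `p-q` among the neighbours. -/
lemma helper_one (hG : Indep3 G) (hpq : p ≠ q) (hpr : p ≠ r) (hqr : q ≠ r)
    (hvp : G.Adj v p) (hvq : G.Adj v q) (hvr : G.Adj v r)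
    (hadj : G.Adj p q)
    {S1 S2 : Set V} (hS1 : S1 ⊆ {v}ᶜ) (hpS1 : p ∈ S1) (hrS1 : r ∈ S1) (hf1 : fF G S1 = 3)
    (hS2 : S2 ⊆ {v}ᶜ) (hqS2 : q ∈ S2) (hrS2 : r ∈ S2) (hf2 : fF G S2 = 3) :
    False := by
  by_cases hq1 : q ∈ S1
  · exact contra_three hG hS1 hpS1 hq1 hrS1 hpq hpr hqr hvp hvq hvr (le_of_eq hf1)
  by_cases hp2 : p ∈ S2
  · exact contra_three hG hS2 hp2 hqS2 hrS2 hpq hpr hqr hvp hvq hvr (le_of_eq hf2)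
  by_cases hint : 2 ≤ (S1 ∩ S2).ncard
  · obtain ⟨hUsub, hUf⟩ := tight_union hG hS1 hS2 hf1 hf2 hint
    exact contra_three hG hUsub (Or.inl hpS1) (Or.inr hqS2) (Or.inl hrS1)
      hpq hpr hqr hvp hvq hvr (le_of_eq hUf)
  · have hsing : S1 ∩ S2 = {r} := singleton_inter ⟨hrS1, hrS2⟩ (by omega)
    have hsub := fF_submod_edge hadj hpS1 hp2 hqS2 hq1
    rw [hsing, fF_singleton] at hsub
    exact contra_three hG (Set.union_subset hS1 hS2) (Or.inl hpS1) (Or.inr hqS2)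
      (Or.inl hrS1) hpq hpr hqr hvp hvq hvr (by omega)

/-- Helper: no edges among the neighbours. -/
lemma helper_zero (hG : Indep3 G) (hpq : p ≠ q) (hpr : p ≠ r) (hqr : q ≠ r)
    (hvp : G.Adj v p) (hvq : G.Adj v q) (hvr : G.Adj v r)
    (hnadj : ¬G.Adj q r)
    {S1 S2 S3 : Set V}
    (hS1 : S1 ⊆ {v}ᶜ) (hpS1 : p ∈ S1) (hqS1 : q ∈ S1) (hf1 : fF G S1 = 3)
    (hS2 : S2 ⊆ {v}ᶜ) (hpS2 : p ∈ S2) (hrS2 : r ∈ S2) (hf2 : fF G S2 = 3)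
    (hS3 : S3 ⊆ {v}ᶜ) (hqS3 : q ∈ S3) (hrS3 : r ∈ S3) (hf3 : fF G S3 = 3) :
    False := by
  by_cases hr1 : r ∈ S1
  · exact contra_three hG hS1 hpS1 hqS1 hr1 hpq hpr hqr hvp hvq hvr (le_of_eq hf1)
  by_cases hq2 : q ∈ S2
  · exact contra_three hG hS2 hpS2 hq2 hrS2 hpq hpr hqr hvp hvq hvr (le_of_eq hf2)
  by_cases hp3 : p ∈ S3
  · exact contra_three hG hS3 hp3 hqS3 hrS3 hpq hpr hqr hvp hvq hvr (le_of_eq hf3)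
  by_cases h12 : 2 ≤ (S1 ∩ S2).ncard
  · obtain ⟨hUsub, hUf⟩ := tight_union hG hS1 hS2 hf1 hf2 h12
    exact contra_three hG hUsub (Or.inl hpS1) (Or.inl hqS1) (Or.inr hrS2)
      hpq hpr hqr hvp hvq hvr (le_of_eq hUf)
  by_cases h13 : 2 ≤ (S1 ∩ S3).ncard
  · obtain ⟨hUsub, hUf⟩ := tight_union hG hS1 hS3 hf1 hf3 h13
    exact contra_three hG hUsub (Or.inl hpS1) (Or.inl hqS1) (Or.inr hrS3)
      hpq hpr hqr hvp hvq hvr (le_of_eq hUf)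
  by_cases h23 : 2 ≤ (S2 ∩ S3).ncard
  · obtain ⟨hUsub, hUf⟩ := tight_union hG hS2 hS3 hf2 hf3 h23
    exact contra_three hG hUsub (Or.inl hpS2) (Or.inr hqS3) (Or.inl hrS2)
      hpq hpr hqr hvp hvq hvr (le_of_eq hUf)
  -- all pairwise intersections are singletons
  have hi12 : S1 ∩ S2 = {p} := singleton_inter ⟨hpS1, hpS2⟩ (by omega)
  have hi13 : S1 ∩ S3 = {q} := singleton_inter ⟨hqS1, hqS3⟩ (by omega)
  have hi23 : S2 ∩ S3 = {r} := singleton_inter ⟨hrS2, hrS3⟩ (by omega)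
  have h12f := fF_submod G S1 S2
  rw [hi12, fF_singleton] at h12f
  have hUf := fF_submod G (S1 ∪ S2) S3
  have hint : (S1 ∪ S2) ∩ S3 = {q, r} := by
    rw [Set.union_inter_distrib_right, hi13, hi23]
    rfl
  rw [hint, fF_pair_nonadj hqr hnadj] at hUf
  rw [Set.union_assoc] at hUf
  exact contra_three hG
    (Set.union_subset hS1 (Set.union_subset hS2 hS3))
    (Or.inl hpS1) (Or.inl hqS1) (Or.inr (Or.inl hrS2))
    hpq hpr hqr hvp hvq hvr (by omega)

/-- The core lemma: some non-adjacent pair of neighbours of the degree-3 vertex `v`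
is contained in no tight set. -/
lemma core_lemma (hG : Indep3 G)
    (hab : a ≠ b) (hac : a ≠ c) (hbc : b ≠ c)
    (hva : G.Adj v a) (hvb : G.Adj v b) (hvc : G.Adj v c) :
    ∃ x y : V, ((x = a ∧ y = b) ∨ (x = a ∧ y = c) ∨ (x = b ∧ y = c)) ∧ ¬G.Adj x y ∧
      ∀ S : Set V, S ⊆ {v}ᶜ → x ∈ S → y ∈ S → 4 ≤ fF G S := by
  by_contra hcon
  push_neg at hcon
  -- from non-goodness, a nonadjacent pair yields a tight set
  have blk : ∀ x y : V, ((x = a ∧ y = b) ∨ (x = a ∧ y = c) ∨ (x = b ∧ y = c)) →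
      x ≠ y → ¬G.Adj x y →
      ∃ S : Set V, S ⊆ {v}ᶜ ∧ x ∈ S ∧ y ∈ S ∧ fF G S = 3 := by
    intro x y hxy hne hnadj
    obtain ⟨S, hSsub, hxS, hyS, hSf⟩ := hcon x y hxy hnadj
    exact ⟨S, hSsub, hxS, hyS, blocked_tight hG hSsub hxS hyS hne (by omega)⟩
  by_cases eab : G.Adj a b <;> by_cases eac : G.Adj a c <;> by_cases ebc : G.Adj b c
  · -- all three adjacent: triangle with v
    have hNsub : ({b, c} : Set V) ⊆ ({b, c} : Set V) := le_refl _
    have haN : a ∉ ({b, c} : Set V) := by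
      rintro (rfl | rfl)
      · exact hab rfl
      · exact hac rfl
    have hN : ∀ y ∈ ({b, c} : Set V), G.Adj a y := by
      rintro z (rfl | rfl)
      · exact eab
      · exact eac
    have h1 := fF_insert haN hNsub hN
    rw [Set.ncard_pair hbc] at h1
    have h2 := pair_adj_fF_le ebc
    have hU : ({a, b, c} : Set V) ⊆ {v}ᶜ := by
      rintro z (rfl | rfl | rfl) <;>
        simp only [Set.mem_compl_iff, Set.mem_singleton_iff]
      · exact fun h => hva.ne h.symm
      · exact fun h => hvb.ne h.symm
      · exact fun h => hvc.ne h.symm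
    exact contra_three hG hU (by simp) (by simp) (by simp)
      hab hac hbc hva hvb hvc (by omega)
  · -- edges ab, ac; bc nonadjacent
    obtain ⟨S, hSs, hbS, hcS, hSf⟩ := blk b c (by tauto) hbc ebc
    exact helper_two hG hbc hab.symm hac.symm hvb hvc hva eab eac hSs hbS hcS hSf
  · -- edges ab, bc; ac nonadjacent
    obtain ⟨S, hSs, haS, hcS, hSf⟩ := blk a c (by tauto) hac eac
    exact helper_two hG hac hab hbc.symm hva hvc hvb eab.symm ebc hSs haS hcS hSf
  · -- edge ab; ac, bc nonadjacent
    obtain ⟨S1, hS1, haS1, hcS1, hf1⟩ := blk a c (by tauto) hac eac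
    obtain ⟨S2, hS2, hbS2, hcS2, hf2⟩ := blk b c (by tauto) hbc ebc
    exact helper_one hG hab hac hbc hva hvb hvc eab hS1 haS1 hcS1 hf1 hS2 hbS2 hcS2 hf2
  · -- edges ac, bc; ab nonadjacent
    obtain ⟨S, hSs, haS, hbS, hSf⟩ := blk a b (by tauto) hab eab
    exact helper_two hG hab hac hbc hva hvb hvc eac.symm ebc.symm hSs haS hbS hSf
  · -- edge ac; ab, bc nonadjacent
    obtain ⟨S1, hS1, haS1, hbS1, hf1⟩ := blk a b (by tauto) hab eab
    obtain ⟨S2, hS2, hbS2, hcS2, hf2⟩ := blk b c (by tauto) hbc ebc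
    exact helper_one hG hac hab hbc.symm hva hvc hvb eac hS1 haS1 hbS1 hf1 hS2 hcS2 hbS2 hf2
  · -- edge bc; ab, ac nonadjacent
    obtain ⟨S1, hS1, haS1, hbS1, hf1⟩ := blk a b (by tauto) hab eab
    obtain ⟨S2, hS2, haS2, hcS2, hf2⟩ := blk a c (by tauto) hac eac
    exact helper_one hG hbc hab.symm hac.symm hvb hvc hva ebc hS1 hbS1 haS1 hf1 hS2 hcS2 haS2 hf2
  · -- no edges
    obtain ⟨S1, hS1, haS1, hbS1, hf1⟩ := blk a b (by tauto) hab eab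
    obtain ⟨S2, hS2, haS2, hcS2, hf2⟩ := blk a c (by tauto) hac eac
    obtain ⟨S3, hS3, hbS3, hcS3, hf3⟩ := blk b c (by tauto) hbc ebc
    exact helper_zero hG hab hac hbc hva hvb hvc ebc hS1 haS1 hbS1 hf1 hS2 haS2 hcS2 hf2
      hS3 hbS3 hcS3 hf3

end Core

/-! ### Degree counting -/

lemma edge_split (G : SimpleGraph V) (v : V) :
    (indE G {v}ᶜ).ncard + (G.neighborSet v).ncard = G.edgeSet.ncard := by
  classical
  have hunion : G.edgeSet = indE G {v}ᶜ ∪ G.incidenceSet v := by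
    ext e
    constructor
    · intro he
      by_cases hv : v ∈ e
      · exact Or.inr ⟨he, hv⟩
      · exact Or.inl ⟨he, fun x hx => fun (h : x = v) => hv (h ▸ hx)⟩
    · rintro (he | he)
      · exact he.1
      · exact he.1
  have hdisj : Disjoint (indE G {v}ᶜ) (G.incidenceSet v) := by
    rw [Set.disjoint_left]
    rintro e ⟨-, h1⟩ ⟨-, h2⟩
    exact h1 v h2 rfl
  have hinc : (G.incidenceSet v).ncard = (G.neighborSet v).ncard := by
    rw [← Nat.card_coe_set_eq, ← Nat.card_coe_set_eq]
    exact Nat.card_congr (G.incidenceSetEquivNeighborSet v)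
  rw [hunion, Set.ncard_union_eq hdisj (Set.toFinite _) (Set.toFinite _), hinc]

lemma ncard_compl_singleton (v : V) :
    ({v}ᶜ : Set V).ncard + 1 = (Set.univ : Set V).ncard := by
  have := Set.ncard_add_ncard_compl ({v} : Set V) (Set.toFinite _) (Set.toFinite _)
  rw [Set.ncard_singleton] at this
  rw [Set.ncard_univ]
  omega

lemma fF_compl_singleton (G : SimpleGraph V) (v : V) :
    fF G {v}ᶜ = gFreedom G - 2 + ((G.neighborSet v).ncard : ℤ) := by
  have h1 := edge_split G v
  have h2 := ncard_compl_singleton v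
  unfold fF gFreedom
  omega

lemma min_degree_two {G : SimpleGraph V} (hG : MaxIndep3 G)
    (hcard : 3 ≤ Fintype.card V) (v : V) : 2 ≤ (G.neighborSet v).ncard := by
  by_contra hd
  push_neg at hd
  have hm : (3 : ℤ) ≤ (G.edgeSet.ncard : ℤ) := by
    have h3 := hG.2
    unfold gFreedom at h3
    rw [Set.ncard_univ] at h3
    have : (Fintype.card V : ℤ) = Nat.card V := by rw [Nat.card_eq_fintype_card]
    omega
  have hsplit := edge_split G v
  have hpos : 0 < (indE G {v}ᶜ).ncard := by omega
  have hne : (indE G {v}ᶜ).Nonempty := Set.nonempty_of_ncard_ne_zero (by omega)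
  have h4 := fF_indep3 hG.1 hne
  rw [fF_compl_singleton, hG.2] at h4
  omega

lemma exists_low_degree {G : SimpleGraph V} (hG : MaxIndep3 G) :
    ∃ v : V, (G.neighborSet v).ncard ≤ 3 := by
  classical
  by_contra h
  push_neg at h
  have hdeg : ∀ v : V, 4 ≤ G.degree v := by
    intro v
    have := h v
    have hd : (G.neighborSet v).ncard = G.degree v := by
      rw [Set.ncard_eq_toFinset_card', Set.toFinset_card]
      exact (G.card_neighborSet_eq_degree v)
    omega
  have hsum := SimpleGraph.sum_degrees_eq_twice_card_edges G
  have hlb : 4 * Fintype.card V ≤ ∑ v : V, G.degree v := by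
    calc 4 * Fintype.card V = ∑ _v : V, 4 := by
          rw [Finset.sum_const, Finset.card_univ]; ring
      _ ≤ ∑ v : V, G.degree v := Finset.sum_le_sum (fun v _ => hdeg v)
  have hedge : (G.edgeFinset.card : ℤ) = (G.edgeSet.ncard : ℤ) := by
    rw [Set.ncard_eq_toFinset_card', SimpleGraph.edgeFinset]
  have h3 := hG.2
  unfold gFreedom at h3
  rw [Set.ncard_univ, Nat.card_eq_fintype_card] at h3
  have : (4 * Fintype.card V : ℤ) ≤ 2 * G.edgeSet.ncard := by
    have := hsum ▸ hlb
    push_cast at this ⊢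
    rw [← hedge]
    exact_mod_cast this
  omega

/-! ### Transfer between a graph on a subtype and induced counts -/

section Transfer

variable {W : Type} [Fintype W] {G : SimpleGraph V} {K : SimpleGraph W} {f : W ↪ V}

lemma indE_transfer (hK : ∀ p q, K.Adj p q ↔ G.Adj (f p) (f q)) (T : Set W) :
    Sym2.map f '' indE K T = indE G (f '' T) := by
  ext e
  constructor
  · rintro ⟨e', he', rfl⟩
    induction e' using Sym2.inductionOn with
    | hf p q =>
      obtain ⟨hadj, hp, hq⟩ := mem_indE.1 he'
      exact mem_indE.2 ⟨(hK p q).1 hadj, ⟨p, hp, rfl⟩, ⟨q, hq, rfl⟩⟩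
  · intro he
    induction e using Sym2.inductionOn with
    | hf x y =>
      obtain ⟨hadj, ⟨p, hp, rfl⟩, ⟨q, hq, rfl⟩⟩ := mem_indE.1 he
      exact ⟨s(p, q), mem_indE.2 ⟨(hK p q).2 hadj, hp, hq⟩, rfl⟩

lemma fF_transfer (hK : ∀ p q, K.Adj p q ↔ G.Adj (f p) (f q)) (T : Set W) :
    fF K T = fF G (f '' T) := by
  unfold fF
  rw [← indE_transfer hK T, Set.ncard_image_of_injective _ (Sym2.map.injective f.injective),
    Set.ncard_image_of_injective _ f.injective]

lemma indep3_transfer (hG : Indep3 G) (hK : ∀ p q, K.Adj p q ↔ G.Adj (f p) (f q)) :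
    Indep3 K := by
  intro Ksub hedge
  obtain ⟨e, he⟩ := hedge
  have h1 : fF K Ksub.verts ≤ subFreedom Ksub := fF_subgraph_le Ksub
  rw [fF_transfer hK] at h1
  refine le_trans (fF_indep3 hG ?_) h1
  induction e using Sym2.inductionOn with
  | hf p q =>
    have hadj := SimpleGraph.Subgraph.mem_edgeSet.1 he
    exact ⟨s(f p, f q), mem_indE.2 ⟨(hK p q).1 hadj.adj_sub,
      ⟨p, hadj.fst_mem, rfl⟩, ⟨q, hadj.snd_mem, rfl⟩⟩⟩

end Transfer

/-! ### Transfer with one extra edge -/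

section TransferExtra

variable {W : Type} [Fintype W] {G : SimpleGraph V} {K : SimpleGraph W} {f : W ↪ V}
  {x' y' : W}

lemma indE_transfer_extra_in
    (hK : ∀ p q, K.Adj p q ↔ (G.Adj (f p) (f q) ∨ (p = x' ∧ q = y') ∨ (p = y' ∧ q = x')))
    {T : Set W} (hx : x' ∈ T) (hy : y' ∈ T) :
    Sym2.map f '' indE K T = insert s(f x', f y') (indE G (f '' T)) := by
  ext e
  constructor
  · rintro ⟨e', he', rfl⟩
    induction e' using Sym2.inductionOn with
    | hf p q =>
      obtain ⟨hadj, hp, hq⟩ := mem_indE.1 he'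
      rcases (hK p q).1 hadj with h | ⟨rfl, rfl⟩ | ⟨rfl, rfl⟩
      · exact Set.mem_insert_of_mem _ (mem_indE.2 ⟨h, ⟨p, hp, rfl⟩, ⟨q, hq, rfl⟩⟩)
      · exact Set.mem_insert _ _
      · rw [Sym2.map_pair_eq, Sym2.eq_swap]
        exact Set.mem_insert _ _
  · rintro (rfl | he)
    · exact ⟨s(x', y'), mem_indE.2 ⟨(hK x' y').2 (Or.inr (Or.inl ⟨rfl, rfl⟩)), hx, hy⟩, rfl⟩
    · induction e using Sym2.inductionOn with
      | hf x y =>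
        obtain ⟨hadj, ⟨p, hp, rfl⟩, ⟨q, hq, rfl⟩⟩ := mem_indE.1 he
        exact ⟨s(p, q), mem_indE.2 ⟨(hK p q).2 (Or.inl hadj), hp, hq⟩, rfl⟩

lemma indE_transfer_extra_out
    (hK : ∀ p q, K.Adj p q ↔ (G.Adj (f p) (f q) ∨ (p = x' ∧ q = y') ∨ (p = y' ∧ q = x')))
    {T : Set W} (hnot : ¬(x' ∈ T ∧ y' ∈ T)) :
    Sym2.map f '' indE K T = indE G (f '' T) := by
  ext e
  constructor
  · rintro ⟨e', he', rfl⟩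
    induction e' using Sym2.inductionOn with
    | hf p q =>
      obtain ⟨hadj, hp, hq⟩ := mem_indE.1 he'
      rcases (hK p q).1 hadj with h | ⟨rfl, rfl⟩ | ⟨rfl, rfl⟩
      · exact mem_indE.2 ⟨h, ⟨p, hp, rfl⟩, ⟨q, hq, rfl⟩⟩
      · exact absurd ⟨hp, hq⟩ hnot
      · exact absurd ⟨hq, hp⟩ hnot
  · intro he
    induction e using Sym2.inductionOn with
    | hf x y =>
      obtain ⟨hadj, ⟨p, hp, rfl⟩, ⟨q, hq, rfl⟩⟩ := mem_indE.1 he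
      exact ⟨s(p, q), mem_indE.2 ⟨(hK p q).2 (Or.inl hadj), hp, hq⟩, rfl⟩

lemma fF_transfer_extra_in
    (hK : ∀ p q, K.Adj p q ↔ (G.Adj (f p) (f q) ∨ (p = x' ∧ q = y') ∨ (p = y' ∧ q = x')))
    (hnadj : ¬G.Adj (f x') (f y'))
    {T : Set W} (hx : x' ∈ T) (hy : y' ∈ T) :
    fF K T = fF G (f '' T) - 1 := by
  have h1 := indE_transfer_extra_in hK hx hy
  have hnm : s(f x', f y') ∉ indE G (f '' T) := fun h => hnadj (mem_indE.1 h).1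
  have h2 : (Sym2.map f '' indE K T).ncard = (indE G (f '' T)).ncard + 1 := by
    rw [h1, Set.ncard_insert_of_notMem hnm (Set.toFinite _)]
  rw [Set.ncard_image_of_injective _ (Sym2.map.injective f.injective)] at h2
  unfold fF
  rw [Set.ncard_image_of_injective _ f.injective]
  omega

lemma fF_transfer_extra_out
    (hK : ∀ p q, K.Adj p q ↔ (G.Adj (f p) (f q) ∨ (p = x' ∧ q = y') ∨ (p = y' ∧ q = x')))
    {T : Set W} (hnot : ¬(x' ∈ T ∧ y' ∈ T)) :
    fF K T = fF G (f '' T) := by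
  have h1 := indE_transfer_extra_out hK hnot
  have h2 : (Sym2.map f '' indE K T).ncard = (indE G (f '' T)).ncard := by rw [h1]
  rw [Set.ncard_image_of_injective _ (Sym2.map.injective f.injective)] at h2
  unfold fF
  rw [Set.ncard_image_of_injective _ f.injective]
  omega

lemma indep3_transfer_extra {v : V} (hG : Indep3 G)
    (hK : ∀ p q, K.Adj p q ↔ (G.Adj (f p) (f q) ∨ (p = x' ∧ q = y') ∨ (p = y' ∧ q = x')))
    (hnadj : ¬G.Adj (f x') (f y'))
    (hrange : ∀ p : W, f p ≠ v)
    (hgood : ∀ S : Set V, S ⊆ {v}ᶜ → f x' ∈ S → f y' ∈ S → 4 ≤ fF G S) :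
    Indep3 K := by
  intro Ksub hedge
  obtain ⟨e, he⟩ := hedge
  have h1 : fF K Ksub.verts ≤ subFreedom Ksub := fF_subgraph_le Ksub
  refine le_trans ?_ h1
  by_cases hin : x' ∈ Ksub.verts ∧ y' ∈ Ksub.verts
  · rw [fF_transfer_extra_in hK hnadj hin.1 hin.2]
    have hgd := hgood (f '' Ksub.verts) ?_ ⟨x', hin.1, rfl⟩ ⟨y', hin.2, rfl⟩
    · omega
    · rintro t ⟨p, hp, rfl⟩
      exact hrange p
  · rw [fF_transfer_extra_out hK hin]
    refine fF_indep3 hG ?_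
    induction e using Sym2.inductionOn with
    | hf p q =>
      have hadj := SimpleGraph.Subgraph.mem_edgeSet.1 he
      rcases (hK p q).1 hadj.adj_sub with h | ⟨rfl, rfl⟩ | ⟨rfl, rfl⟩
      · exact ⟨s(f p, f q), mem_indE.2 ⟨h, ⟨p, hadj.fst_mem, rfl⟩, ⟨q, hadj.snd_mem, rfl⟩⟩⟩
      · exact absurd ⟨hadj.fst_mem, hadj.snd_mem⟩ hin
      · exact absurd ⟨hadj.snd_mem, hadj.fst_mem⟩ hin

end TransferExtra

/-! ### Transport of Henneberg relations along isomorphisms -/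

section Transport

variable {α β γ δ : Type} {G₁ : SimpleGraph α} {G₂ : SimpleGraph β}
  {H₁ : SimpleGraph γ} {H₂ : SimpleGraph δ}

lemma h1_transport (e : G₁ ≃g H₁) (e' : G₂ ≃g H₂) (φ : α ↪ β) (ψ : γ ↪ δ)
    (w : β) (w' : δ) (hw : e' w = w') (hcomm : ∀ x : α, e' (φ x) = ψ (e x))
    (h : Henneberg1Rel G₁ G₂ φ w) : Henneberg1Rel H₁ H₂ ψ w' := by
  obtain ⟨hcov, hwr, a, b, hab, hadj⟩ := h
  have key : ∀ (t : δ) (c : α), e'.symm t = φ c ↔ t = ψ (e c) := by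
    intro t c
    constructor
    · intro h
      rw [← e'.apply_symm_apply t, h, hcomm]
    · intro h
      rw [h, ← hcomm, e'.symm_apply_apply]
  have keyw : ∀ t : δ, e'.symm t = w ↔ t = w' := by
    intro t
    constructor
    · intro h
      rw [← e'.apply_symm_apply t, h, hw]
    · intro h
      rw [h, ← hw, e'.symm_apply_apply]
  refine ⟨?_, ?_, e a, e b, fun hc => hab (e.toEquiv.injective hc), ?_⟩
  · intro y
    rcases hcov (e'.symm y) with ⟨x, hx⟩ | hxw
    · exact Or.inl ⟨e x, ((key y x).1 hx.symm).symm⟩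
    · exact Or.inr ((keyw y).1 hxw)
  · rintro ⟨c, hc⟩
    have h2 : w' = ψ (e (e.symm c)) := by rw [e.apply_symm_apply, hc]
    have h3 : e'.symm w' = φ (e.symm c) := (key w' (e.symm c)).2 h2
    have h4 : e'.symm w' = w := by rw [← hw, e'.symm_apply_apply]
    exact hwr ⟨e.symm c, by rw [← h4, h3]⟩
  · intro x y
    have hiso : H₂.Adj x y ↔ G₂.Adj (e'.symm x) (e'.symm y) := by
      conv_lhs => rw [← e'.apply_symm_apply x, ← e'.apply_symm_apply y]
      exact e'.map_adj_iff
    rw [hiso, hadj (e'.symm x) (e'.symm y)]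
    constructor
    · rintro (⟨c, d, h1, h2, h3⟩ | ⟨h1, h2 | h2⟩ | ⟨h1, h2 | h2⟩)
      · exact Or.inl ⟨e c, e d, e.map_adj_iff.2 h1, (key x c).1 h2, (key y d).1 h3⟩
      · exact Or.inr (Or.inl ⟨(keyw x).1 h1, Or.inl ((key y a).1 h2)⟩)
      · exact Or.inr (Or.inl ⟨(keyw x).1 h1, Or.inr ((key y b).1 h2)⟩)
      · exact Or.inr (Or.inr ⟨(keyw y).1 h1, Or.inl ((key x a).1 h2)⟩)
      · exact Or.inr (Or.inr ⟨(keyw y).1 h1, Or.inr ((key x b).1 h2)⟩)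
    · rintro (⟨c, d, h1, h2, h3⟩ | ⟨h1, h2 | h2⟩ | ⟨h1, h2 | h2⟩)
      · refine Or.inl ⟨e.symm c, e.symm d, ?_, ?_, ?_⟩
        · have : H₁.Adj (e (e.symm c)) (e (e.symm d)) := by simpa using h1
          exact e.map_adj_iff.1 this
        · rw [key x (e.symm c)]
          simpa using h2
        · rw [key y (e.symm d)]
          simpa using h3
      · exact Or.inr (Or.inl ⟨(keyw x).2 h1, Or.inl ((key y a).2 h2)⟩)
      · exact Or.inr (Or.inl ⟨(keyw x).2 h1, Or.inr ((key y b).2 h2)⟩)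
      · exact Or.inr (Or.inr ⟨(keyw y).2 h1, Or.inl ((key x a).2 h2)⟩)
      · exact Or.inr (Or.inr ⟨(keyw y).2 h1, Or.inr ((key x b).2 h2)⟩)

lemma h2_transport (e : G₁ ≃g H₁) (e' : G₂ ≃g H₂) (φ : α ↪ β) (ψ : γ ↪ δ)
    (w : β) (w' : δ) (hw : e' w = w') (hcomm : ∀ x : α, e' (φ x) = ψ (e x))
    (h : Henneberg2Rel G₁ G₂ φ w) : Henneberg2Rel H₁ H₂ ψ w' := by
  obtain ⟨hcov, hwr, u, v, z, huv, hzu, hzv, hadj⟩ := h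
  have key : ∀ (t : δ) (c : α), e'.symm t = φ c ↔ t = ψ (e c) := by
    intro t c
    constructor
    · intro h
      rw [← e'.apply_symm_apply t, h, hcomm]
    · intro h
      rw [h, ← hcomm, e'.symm_apply_apply]
  have keyw : ∀ t : δ, e'.symm t = w ↔ t = w' := by
    intro t
    constructor
    · intro h
      rw [← e'.apply_symm_apply t, h, hw]
    · intro h
      rw [h, ← hw, e'.symm_apply_apply]
  have keys : ∀ c d : α, s(e c, e d) = s(e u, e v) ↔ s(c, d) = s(u, v) := by
    intro c d
    simp only [Sym2.eq_iff]
    constructor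
    · rintro (⟨h1, h2⟩ | ⟨h1, h2⟩)
      · exact Or.inl ⟨e.toEquiv.injective h1, e.toEquiv.injective h2⟩
      · exact Or.inr ⟨e.toEquiv.injective h1, e.toEquiv.injective h2⟩
    · rintro (⟨rfl, rfl⟩ | ⟨rfl, rfl⟩)
      · exact Or.inl ⟨rfl, rfl⟩
      · exact Or.inr ⟨rfl, rfl⟩
  refine ⟨?_, ?_, e u, e v, e z,
    e.map_adj_iff.2 huv,
    fun hc => hzu (e.toEquiv.injective hc), fun hc => hzv (e.toEquiv.injective hc), ?_⟩
  · intro y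
    rcases hcov (e'.symm y) with ⟨x, hx⟩ | hxw
    · exact Or.inl ⟨e x, ((key y x).1 hx.symm).symm⟩
    · exact Or.inr ((keyw y).1 hxw)
  · rintro ⟨c, hc⟩
    have h2 : w' = ψ (e (e.symm c)) := by rw [e.apply_symm_apply, hc]
    have h3 : e'.symm w' = φ (e.symm c) := (key w' (e.symm c)).2 h2
    have h4 : e'.symm w' = w := by rw [← hw, e'.symm_apply_apply]
    exact hwr ⟨e.symm c, by rw [← h4, h3]⟩
  · intro x y
    have hiso : H₂.Adj x y ↔ G₂.Adj (e'.symm x) (e'.symm y) := by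
      conv_lhs => rw [← e'.apply_symm_apply x, ← e'.apply_symm_apply y]
      exact e'.map_adj_iff
    rw [hiso, hadj (e'.symm x) (e'.symm y)]
    constructor
    · rintro (⟨c, d, h1, hne, h2, h3⟩ | ⟨h1, h2 | h2 | h2⟩ | ⟨h1, h2 | h2 | h2⟩)
      · exact Or.inl ⟨e c, e d, e.map_adj_iff.2 h1, fun hh => hne ((keys c d).1 hh),
          (key x c).1 h2, (key y d).1 h3⟩
      · exact Or.inr (Or.inl ⟨(keyw x).1 h1, Or.inl ((key y u).1 h2)⟩)
      · exact Or.inr (Or.inl ⟨(keyw x).1 h1, Or.inr (Or.inl ((key y v).1 h2))⟩)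
      · exact Or.inr (Or.inl ⟨(keyw x).1 h1, Or.inr (Or.inr ((key y z).1 h2))⟩)
      · exact Or.inr (Or.inr ⟨(keyw y).1 h1, Or.inl ((key x u).1 h2)⟩)
      · exact Or.inr (Or.inr ⟨(keyw y).1 h1, Or.inr (Or.inl ((key x v).1 h2))⟩)
      · exact Or.inr (Or.inr ⟨(keyw y).1 h1, Or.inr (Or.inr ((key x z).1 h2))⟩)
    · rintro (⟨c, d, h1, hne, h2, h3⟩ | ⟨h1, h2 | h2 | h2⟩ | ⟨h1, h2 | h2 | h2⟩)
      · refine Or.inl ⟨e.symm c, e.symm d, ?_, ?_, ?_, ?_⟩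
        · have : H₁.Adj (e (e.symm c)) (e (e.symm d)) := by simpa using h1
          exact e.map_adj_iff.1 this
        · intro hh
          apply hne
          have := (keys (e.symm c) (e.symm d)).2 hh
          simpa using this
        · rw [key x (e.symm c)]
          simpa using h2
        · rw [key y (e.symm d)]
          simpa using h3
      · exact Or.inr (Or.inl ⟨(keyw x).2 h1, Or.inl ((key y u).2 h2)⟩)
      · exact Or.inr (Or.inl ⟨(keyw x).2 h1, Or.inr (Or.inl ((key y v).2 h2))⟩)
      · exact Or.inr (Or.inl ⟨(keyw x).2 h1, Or.inr (Or.inr ((key y z).2 h2))⟩)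
      · exact Or.inr (Or.inr ⟨(keyw y).2 h1, Or.inl ((key x u).2 h2)⟩)
      · exact Or.inr (Or.inr ⟨(keyw y).2 h1, Or.inr (Or.inl ((key x v).2 h2))⟩)
      · exact Or.inr (Or.inr ⟨(keyw y).2 h1, Or.inr (Or.inr ((key x z).2 h2))⟩)

end Transport

/-! ### Base Henneberg relations at a deleted vertex -/

section BaseRel

variable {G : SimpleGraph V} {v : V}

lemma h1_base {a b : V} (hnb : G.neighborSet v = {a, b}) (hab : a ≠ b)
    (hav : a ≠ v) (hbv : b ≠ v) :
    Henneberg1Rel (G.comap (Function.Embedding.subtype (· ≠ v))) G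
      (Function.Embedding.subtype (· ≠ v)) v := by
  have hva : G.Adj v a := (G.mem_neighborSet v a).1 (hnb ▸ Set.mem_insert _ _)
  have hvb : G.Adj v b := (G.mem_neighborSet v b).1 (hnb ▸ Set.mem_insert_of_mem _ rfl)
  refine ⟨?_, ?_, ⟨a, hav⟩, ⟨b, hbv⟩, fun h => hab (congrArg Subtype.val h), ?_⟩
  · intro y
    by_cases hy : y = v
    · exact Or.inr hy
    · exact Or.inl ⟨⟨y, hy⟩, rfl⟩
  · rintro ⟨⟨t, ht⟩, h⟩
    exact ht h
  · intro s t
    constructor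
    · intro hst
      by_cases hs : s = v
      · subst hs
        refine Or.inr (Or.inl ⟨rfl, ?_⟩)
        have : t ∈ G.neighborSet s := hst
        rw [hnb] at this
        rcases this with rfl | rfl
        · exact Or.inl rfl
        · exact Or.inr rfl
      · by_cases ht : t = v
        · subst ht
          refine Or.inr (Or.inr ⟨rfl, ?_⟩)
          have : s ∈ G.neighborSet t := hst.symm
          rw [hnb] at this
          rcases this with rfl | rfl
          · exact Or.inl rfl
          · exact Or.inr rfl
        · exact Or.inl ⟨⟨s, hs⟩, ⟨t, ht⟩, hst, rfl, rfl⟩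
    · rintro (⟨p, q, hpq, rfl, rfl⟩ | ⟨rfl, rfl | rfl⟩ | ⟨rfl, rfl | rfl⟩)
      · exact hpq
      · exact hva
      · exact hvb
      · exact hva.symm
      · exact hvb.symm

lemma h2_base {x y z : V} {K : SimpleGraph {t : V // t ≠ v}}
    (hnb : G.neighborSet v = {x, y, z}) (hxy : x ≠ y) (hzx : z ≠ x) (hzy : z ≠ y)
    (hnadj : ¬G.Adj x y) (hxv : x ≠ v) (hyv : y ≠ v) (hzv : z ≠ v)
    (hK : ∀ p q : {t : V // t ≠ v}, K.Adj p q ↔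
      (G.Adj ↑p ↑q ∨ (p = ⟨x, hxv⟩ ∧ q = ⟨y, hyv⟩) ∨ (p = ⟨y, hyv⟩ ∧ q = ⟨x, hxv⟩))) :
    Henneberg2Rel K G (Function.Embedding.subtype (· ≠ v)) v := by
  have hvx : G.Adj v x := (G.mem_neighborSet v x).1 (hnb ▸ by simp)
  have hvy : G.Adj v y := (G.mem_neighborSet v y).1 (hnb ▸ by simp)
  have hvz : G.Adj v z := (G.mem_neighborSet v z).1 (hnb ▸ by simp)
  refine ⟨?_, ?_, ⟨x, hxv⟩, ⟨y, hyv⟩, ⟨z, hzv⟩,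
    (hK _ _).2 (Or.inr (Or.inl ⟨rfl, rfl⟩)),
    fun h => hzx (congrArg Subtype.val h), fun h => hzy (congrArg Subtype.val h), ?_⟩
  · intro t
    by_cases ht : t = v
    · exact Or.inr ht
    · exact Or.inl ⟨⟨t, ht⟩, rfl⟩
  · rintro ⟨⟨t, ht⟩, h⟩
    exact ht h
  · intro s t
    constructor
    · intro hst
      by_cases hs : s = v
      · subst hs
        refine Or.inr (Or.inl ⟨rfl, ?_⟩)
        have : t ∈ G.neighborSet s := hst
        rw [hnb] at this
        rcases this with rfl | rfl | rfl
        · exact Or.inl rfl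
        · exact Or.inr (Or.inl rfl)
        · exact Or.inr (Or.inr rfl)
      · by_cases ht : t = v
        · subst ht
          refine Or.inr (Or.inr ⟨rfl, ?_⟩)
          have : s ∈ G.neighborSet t := hst.symm
          rw [hnb] at this
          rcases this with rfl | rfl | rfl
          · exact Or.inl rfl
          · exact Or.inr (Or.inl rfl)
          · exact Or.inr (Or.inr rfl)
        · refine Or.inl ⟨⟨s, hs⟩, ⟨t, ht⟩, (hK _ _).2 (Or.inl hst), ?_, rfl, rfl⟩
          intro hcon
          rw [Sym2.eq_iff] at hcon
          rcases hcon with ⟨h1, h2⟩ | ⟨h1, h2⟩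
          · rw [show s = x from congrArg Subtype.val h1,
              show t = y from congrArg Subtype.val h2] at hst
            exact hnadj hst
          · rw [show s = y from congrArg Subtype.val h1,
              show t = x from congrArg Subtype.val h2] at hst
            exact hnadj hst.symm
    · rintro (⟨p, q, hpq, hne, rfl, rfl⟩ | ⟨rfl, rfl | rfl | rfl⟩ | ⟨rfl, rfl | rfl | rfl⟩)
      · rcases (hK p q).1 hpq with h | ⟨rfl, rfl⟩ | ⟨rfl, rfl⟩
        · exact h
        · exact absurd rfl hne
        · exact absurd (Sym2.eq_swap) hne
      · exact hvx
      · exact hvy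
      · exact hvz
      · exact hvx.symm
      · exact hvy.symm
      · exact hvz.symm

end BaseRel

def finCastSuccEmb (n : ℕ) : Fin n ↪ Fin (n + 1) :=
  ⟨Fin.castSucc, Fin.castSucc_injective n⟩

/-- `Derived G0 n G` : the graph `G` on `Fin n` is obtained from the base graph `G0`
by a finite sequence of Henneberg 1 and Henneberg 2 moves. -/
inductive Derived {m : ℕ} (G0 : SimpleGraph (Fin m)) : (n : ℕ) → SimpleGraph (Fin n) → Prop
  | base : Derived G0 m G0
  | h1 {n : ℕ} {G : SimpleGraph (Fin n)} {G' : SimpleGraph (Fin (n + 1))} :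
      Derived G0 n G → Henneberg1Rel G G' (finCastSuccEmb n) (Fin.last n) →
      Derived G0 (n + 1) G'
  | h2 {n : ℕ} {G : SimpleGraph (Fin n)} {G' : SimpleGraph (Fin (n + 1))} :
      Derived G0 n G → Henneberg2Rel G G' (finCastSuccEmb n) (Fin.last n) →
      Derived G0 (n + 1) G'


/-! ### Main induction -/

lemma range_subtype_ne (v : V) :
    Set.range ⇑(Function.Embedding.subtype (· ≠ v)) = ({v}ᶜ : Set V) := by
  ext t
  simp [Function.Embedding.coe_subtype, Subtype.range_coe_subtype]

lemma main_aux (N : ℕ) : ∀ (V : Type) [Fintype V] (G : SimpleGraph V),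
    Fintype.card V = N → MaxIndep3 G →
    ∃ (n : ℕ) (G' : SimpleGraph (Fin n)),
      Derived (⊤ : SimpleGraph (Fin 2)) n G' ∧ Nonempty (G ≃g G') := by
  induction N using Nat.strong_induction_on with
  | _ N IH =>
  intro V _ G hcard hG
  classical
  have hgf := hG.2
  have hmV : 2 * (N : ℤ) - (G.edgeSet.ncard : ℤ) = 3 := by
    unfold gFreedom at hgf
    rw [Set.ncard_univ, Nat.card_eq_fintype_card, hcard] at hgf
    exact_mod_cast hgf
  have hN2 : 2 ≤ N := by omega
  rcases hN2.eq_or_lt with heq | hN3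
  · -- base case : N = 2
    have hadj : ∀ s t : V, s ≠ t → G.Adj s t := by
      intro s t hst
      obtain ⟨w⟩ := (maxIndep3_connected hG).preconnected s t
      cases w with
      | nil => exact absurd rfl hst
      | @cons _ z _ h p =>
        by_cases hzt : z = t
        · exact hzt ▸ h
        · exfalso
          have hsz : s ≠ z := h.ne
          have hc3 : ({s, z, t} : Finset V).card = 3 := by
            rw [Finset.card_insert_of_notMem (by simp [hsz, hst]),
              Finset.card_insert_of_notMem (by simp [hzt]), Finset.card_singleton]
          have hle := Finset.card_le_univ ({s, z, t} : Finset V)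
          rw [hc3] at hle
          omega
    have e : V ≃ Fin 2 := Fintype.equivFinOfCardEq (by omega)
    refine ⟨2, ⊤, Derived.base, ⟨⟨e, ?_⟩⟩⟩
    intro p q
    simp only [SimpleGraph.top_adj, ne_eq, EmbeddingLike.apply_eq_iff_eq]
    exact ⟨fun h => hadj p q h, fun h => h.ne⟩
  · -- inductive step : N ≥ 3
    obtain ⟨v, hv3⟩ := exists_low_degree hG
    have hv2 := min_degree_two hG (by omega) v
    have hcardW : Fintype.card {t : V // t ≠ v} = N - 1 := by
      have h1 : Fintype.card {t : V // t = v} = 1 := Fintype.card_subtype_eq v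
      have := Fintype.card_subtype_compl (fun t : V => t = v)
      rw [h1, hcard] at this
      exact this
    set ι : {t : V // t ≠ v} ↪ V := Function.Embedding.subtype (· ≠ v) with hι
    have hrange : ∀ p : {t : V // t ≠ v}, ι p ≠ v := fun p => p.2
    have himg_univ : ι '' Set.univ = ({v}ᶜ : Set V) := by
      rw [Set.image_univ, hι, range_subtype_ne]
    interval_cases hdeg : (G.neighborSet v).ncard
    · -- degree 2 : Henneberg 1
      obtain ⟨a, b, hab, hnbs⟩ := Set.ncard_eq_two.1 hdeg
      have hva : G.Adj v a := (G.mem_neighborSet v a).1 (hnbs ▸ by simp)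
      have hvb : G.Adj v b := (G.mem_neighborSet v b).1 (hnbs ▸ by simp)
      set K : SimpleGraph {t : V // t ≠ v} := G.comap ι with hKdef
      have hK : ∀ p q, K.Adj p q ↔ G.Adj (ι p) (ι q) := fun _ _ => Iff.rfl
      have hKmax : MaxIndep3 K := by
        refine ⟨indep3_transfer hG.1 hK, ?_⟩
        rw [← fF_univ, fF_transfer hK, himg_univ, fF_compl_singleton, hG.2, hdeg]
        ring
      obtain ⟨n', G'', hDer, ⟨eIso⟩⟩ := IH (N - 1) (by omega) _ K hcardW hKmax
      obtain ⟨E, hEv, hEx⟩ : ∃ E : V ≃ Fin (n' + 1), E v = Fin.last n' ∧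
          ∀ p : {t : V // t ≠ v}, E ↑p = (eIso p).castSucc := by
        refine ⟨(Equiv.optionSubtypeNe v).symm.trans
          ((Equiv.optionCongr eIso.toEquiv).trans finSuccEquivLast.symm), ?_, ?_⟩
        · simp [Equiv.optionSubtypeNe_symm_self]
        · intro p
          rw [Equiv.trans_apply, Equiv.trans_apply,
            Equiv.optionSubtypeNe_symm_of_ne p.2]
          simp
      obtain ⟨isoG, hIv, hIc⟩ : ∃ iso : G ≃g SimpleGraph.comap (⇑E.symm) G,
          iso v = Fin.last n' ∧ ∀ p : {t : V // t ≠ v}, iso ↑p = (eIso p).castSucc :=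
        ⟨⟨E, by simp⟩, hEv, hEx⟩
      have hrel : Henneberg1Rel K G ι v := h1_base hnbs hab hva.ne' hvb.ne'
      have htrans := h1_transport eIso isoG ι (finCastSuccEmb n') v (Fin.last n')
        hIv (fun p => hIc p) hrel
      exact ⟨n' + 1, _, Derived.h1 hDer htrans, ⟨isoG⟩⟩
    · -- degree 3 : Henneberg 2
      obtain ⟨a, b, c, hab, hac, hbc, hnbs⟩ := Set.ncard_eq_three.1 hdeg
      have hva : G.Adj v a := (G.mem_neighborSet v a).1 (hnbs ▸ by simp)
      have hvb : G.Adj v b := (G.mem_neighborSet v b).1 (hnbs ▸ by simp)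
      have hvc : G.Adj v c := (G.mem_neighborSet v c).1 (hnbs ▸ by simp)
      obtain ⟨x, y, hpat, hnadj, hgood⟩ := core_lemma hG.1 hab hac hbc hva hvb hvc
      obtain ⟨z, hxy, hzx, hzy, hnbs'⟩ : ∃ z : V, x ≠ y ∧ z ≠ x ∧ z ≠ y ∧
          G.neighborSet v = {x, y, z} := by
        rcases hpat with ⟨rfl, rfl⟩ | ⟨rfl, rfl⟩ | ⟨rfl, rfl⟩
        · exact ⟨c, hab, hac.symm, hbc.symm, hnbs⟩
        · refine ⟨b, hac, hab.symm, hbc, ?_⟩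
          rw [hnbs]
          ext t
          simp only [Set.mem_insert_iff, Set.mem_singleton_iff]
          tauto
        · refine ⟨a, hbc, hab, hac, ?_⟩
          rw [hnbs]
          ext t
          simp only [Set.mem_insert_iff, Set.mem_singleton_iff]
          tauto
      have hvx : G.Adj v x := (G.mem_neighborSet v x).1 (hnbs' ▸ by simp)
      have hvy : G.Adj v y := (G.mem_neighborSet v y).1 (hnbs' ▸ by simp)
      have hvz : G.Adj v z := (G.mem_neighborSet v z).1 (hnbs' ▸ by simp)
      have hxv : x ≠ v := hvx.ne'
      have hyv : y ≠ v := hvy.ne'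
      have hzv : z ≠ v := hvz.ne'
      set K : SimpleGraph {t : V // t ≠ v} :=
        G.comap ι ⊔ SimpleGraph.fromEdgeSet {s((⟨x, hxv⟩ : {t : V // t ≠ v}), ⟨y, hyv⟩)}
        with hKdef
      have hK : ∀ p q : {t : V // t ≠ v}, K.Adj p q ↔
          (G.Adj (ι p) (ι q) ∨ (p = ⟨x, hxv⟩ ∧ q = ⟨y, hyv⟩) ∨
            (p = ⟨y, hyv⟩ ∧ q = ⟨x, hxv⟩)) := by
        intro p q
        rw [hKdef, SimpleGraph.sup_adj, SimpleGraph.fromEdgeSet_adj]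
        constructor
        · rintro (h | ⟨hmem, hne⟩)
          · exact Or.inl h
          · rw [Set.mem_singleton_iff, Sym2.eq_iff] at hmem
            rcases hmem with ⟨h1, h2⟩ | ⟨h1, h2⟩
            · exact Or.inr (Or.inl ⟨h1, h2⟩)
            · exact Or.inr (Or.inr ⟨h1, h2⟩)
        · rintro (h | ⟨rfl, rfl⟩ | ⟨rfl, rfl⟩)
          · exact Or.inl h
          · exact Or.inr ⟨rfl, fun h => hxy (congrArg Subtype.val h)⟩
          · exact Or.inr ⟨Sym2.eq_swap, fun h => hxy (congrArg Subtype.val h.symm)⟩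
      have hnadj' : ¬G.Adj (ι ⟨x, hxv⟩) (ι ⟨y, hyv⟩) := hnadj
      have hKmax : MaxIndep3 K := by
        refine ⟨indep3_transfer_extra hG.1 hK hnadj' hrange hgood, ?_⟩
        rw [← fF_univ, fF_transfer_extra_in hK hnadj' (Set.mem_univ _) (Set.mem_univ _),
          himg_univ, fF_compl_singleton, hG.2, hdeg]
        ring
      obtain ⟨n', G'', hDer, ⟨eIso⟩⟩ := IH (N - 1) (by omega) _ K hcardW hKmax
      obtain ⟨E, hEv, hEx⟩ : ∃ E : V ≃ Fin (n' + 1), E v = Fin.last n' ∧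
          ∀ p : {t : V // t ≠ v}, E ↑p = (eIso p).castSucc := by
        refine ⟨(Equiv.optionSubtypeNe v).symm.trans
          ((Equiv.optionCongr eIso.toEquiv).trans finSuccEquivLast.symm), ?_, ?_⟩
        · simp [Equiv.optionSubtypeNe_symm_self]
        · intro p
          rw [Equiv.trans_apply, Equiv.trans_apply,
            Equiv.optionSubtypeNe_symm_of_ne p.2]
          simp
      obtain ⟨isoG, hIv, hIc⟩ : ∃ iso : G ≃g SimpleGraph.comap (⇑E.symm) G,
          iso v = Fin.last n' ∧ ∀ p : {t : V // t ≠ v}, iso ↑p = (eIso p).castSucc :=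
        ⟨⟨E, by simp⟩, hEv, hEx⟩
      have hrel : Henneberg2Rel K G ι v :=
        h2_base hnbs' hxy hzx hzy hnadj hxv hyv hzv hK
      have htrans := h2_transport eIso isoG ι (finCastSuccEmb n') v (Fin.last n')
        hIv (fun p => hIc p) hrel
      exact ⟨n' + 1, _, Derived.h2 hDer htrans, ⟨isoG⟩⟩

/-- Every Laman graph arises from the complete graph `K₂` by
a finite sequence of Henneberg 1 and Henneberg 2 moves. -/
theorem laman_derived_from_K2 {V : Type} [Fintype V] (G : SimpleGraph V)
    (hG : Laman G) :
    ∃ (n : ℕ) (G' : SimpleGraph (Fin n)),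
      Derived (⊤ : SimpleGraph (Fin 2)) n G' ∧ Nonempty (G ≃g G') :=
  main_aux (Fintype.card V) V G rfl hG.2
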